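/- Let $(A, \bullet_{\alpha,\beta}, p_\alpha, q_\alpha)_{\alpha,\beta\in\Omega}$ be a BiHom-$\Omega$-associative algebra and let $(R_\alpha)_{\alpha\in\Omega}$ be a Rota-Baxter family of weight $\lambda$ on $A$ commuting with $p_\alpha$ and $q_\alpha$. Define $x\prec'_{\alpha,\beta}y := x\bullet_{\alpha,\beta}R_\beta(y) + \lambda\, x\bullet_{\alpha,\beta}y$ and $x\succ'_{\alpha,\beta}y := R_\alpha(x)\bullet_{\alpha,\beta}y$. Then $(A, \prec'_{\alpha,\beta}, \succ'_{\alpha,\beta}, p_\alpha, q_\alpha)_{\alpha,\beta\in\Omega}$ is a BiHom-$\Omega$-dendriform algebra. -/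
import Mathlib


/-- A Rota-Baxter family of weight λ on a BiHom-Ω-associative algebra induces a
BiHom-Ω-dendriform algebra. -/
theorem stmt_6
    {K : Type*} [Field K] {Ω : Type*} [Semigroup Ω]
    {A : Type*} [AddCommGroup A] [Module K A]
    (mul : Ω → Ω → A →ₗ[K] A →ₗ[K] A)
    (p q : Ω → A →ₗ[K] A)
    (lam : K)
    -- (A, mul, p, q) is a BiHom-Ω-associative algebra
    (hp : ∀ (α β : Ω) (x y : A), p (α * β) (mul α β x y) = mul α β (p α x) (p β y))
    (hq : ∀ (α β : Ω) (x y : A), q (α * β) (mul α β x y) = mul α β (q α x) (q β y))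
    (hpq : ∀ (α : Ω) (x : A), p α (q α x) = q α (p α x))
    (hassoc : ∀ (α β γ : Ω) (x y z : A),
      mul α (β * γ) (p α x) (mul β γ y z) = mul (α * β) γ (mul α β x y) (q γ z))
    -- (R_α) is a Rota-Baxter family of weight 0, commuting with p and q
    (R : Ω → A →ₗ[K] A)
    (hRB : ∀ (α β : Ω) (x y : A),
      mul α β (R α x) (R β y) = R (α * β) (mul α β (R α x) y + mul α β x (R β y) + lam • mul α β x y))
    (hRp : ∀ (α : Ω) (x : A), R α (p α x) = p α (R α x))
    (hRq : ∀ (α : Ω) (x : A), R α (q α x) = q α (R α x))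
    -- the induced operations
    (prec succ : Ω → Ω → A → A → A)
    (hprec : ∀ (α β : Ω) (x y : A), prec α β x y = mul α β x (R β y) + lam • mul α β x y)
    (hsucc : ∀ (α β : Ω) (x y : A), succ α β x y = mul α β (R α x) y) :
    -- (A, prec, succ, p, q) is a BiHom-Ω-dendriform algebra
    (∀ (α β : Ω) (x y : A), p (α * β) (prec α β x y) = prec α β (p α x) (p β y)) ∧
    (∀ (α β : Ω) (x y : A), p (α * β) (succ α β x y) = succ α β (p α x) (p β y)) ∧
    (∀ (α β : Ω) (x y : A), q (α * β) (prec α β x y) = prec α β (q α x) (q β y)) ∧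
    (∀ (α β : Ω) (x y : A), q (α * β) (succ α β x y) = succ α β (q α x) (q β y)) ∧
    (∀ (α β γ : Ω) (x y z : A),
      prec (α * β) γ (prec α β x y) (q γ z)
        = prec α (β * γ) (p α x) (prec β γ y z + succ β γ y z)) ∧
    (∀ (α β γ : Ω) (x y z : A),
      prec (α * β) γ (succ α β x y) (q γ z) = succ α (β * γ) (p α x) (prec β γ y z)) ∧
    (∀ (α β γ : Ω) (x y z : A),
      succ α (β * γ) (p α x) (succ β γ y z)
        = succ (α * β) γ (prec α β x y + succ α β x y) (q γ z)) := by

  refine ⟨?_, ?_, ?_, ?_, ?_, ?_, ?_⟩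
  · intro α β x y
    simp only [hprec, map_add, map_smul, hp, hRp]
  · intro α β x y
    simp only [hsucc, hp, hRp]
  · intro α β x y
    simp only [hprec, map_add, map_smul, hq, hRq]
  · intro α β x y
    simp only [hsucc, hq, hRq]
  · intro α β γ x y z
    simp only [hprec, hsucc, map_add, map_smul, LinearMap.add_apply, LinearMap.smul_apply,
      hRq, mul_assoc]
    rw [← hassoc, ← hassoc, ← hassoc, ← hassoc, hRB]
    simp only [map_add, map_smul]
    module
  · intro α β γ x y z
    simp only [hprec, hsucc, map_add, map_smul, LinearMap.add_apply, LinearMap.smul_apply,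
      hRq, hRp, mul_assoc]
    rw [← hassoc, ← hassoc]
  · intro α β γ x y z
    simp only [hprec, hsucc, map_add, map_smul, LinearMap.add_apply, LinearMap.smul_apply,
      hRp, mul_assoc]
    rw [hassoc, hRB]
    simp only [map_add, map_smul, LinearMap.add_apply, LinearMap.smul_apply]
    module
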